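/- Let Y be a weakly irreducible combinatorial Markov chain with Martin kernel K. For each fixed x ∈ 𝔽_k, the process (K(x, Y_n))_{n > k} is a backwards martingale with respect to the filtration 𝒢_n = σ(Y_m : m ≥ n); that is, E[K(x, Y_n) | 𝒢_{n+1}] = K(x, Y_{n+1}) for all n > k. -/

import Mathlib

set_option linter.unusedSectionVars false
set_option maxHeartbeats 1000000

open MeasureTheory Filter
open scoped ENNReal

namespace CMCAux



lemma enn_cancel_right {a b c : ℝ≥0∞} (h0 : c ≠ 0) (ht : c ≠ ⊤) (h : a * c = b * c) : a = b := by
  have h2 : a * c * c⁻¹ = b * c * c⁻¹ := by rw [h]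
  rwa [mul_assoc, mul_assoc, ENNReal.mul_inv_cancel h0 ht, mul_one, mul_one] at h2

variable {Ω F : Type*} [MeasurableSpace Ω] [MeasurableSpace F] [MeasurableSingletonClass F]

/-- cylinder event -/
def cyl (Y : ℕ → Ω → F) (t : Finset ℕ) (p : ℕ → F) : Set Ω := ⋂ i ∈ t, {ω | Y i ω = p i}

lemma measurableSet_ev {Y : ℕ → Ω → F} (hY : ∀ n, Measurable (Y n)) (i : ℕ) (y : F) :
    MeasurableSet {ω | Y i ω = y} := hY i (measurableSet_singleton y)

lemma measurableSet_cyl {Y : ℕ → Ω → F} (hY : ∀ n, Measurable (Y n)) (t : Finset ℕ) (p : ℕ → F) :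
    MeasurableSet (cyl Y t p) :=
  Finset.measurableSet_biInter t fun i _ => measurableSet_ev hY i (p i)

lemma cyl_empty (Y : ℕ → Ω → F) (p : ℕ → F) : cyl Y ∅ p = Set.univ := by
  simp [cyl]

lemma cyl_insert (Y : ℕ → Ω → F) (j : ℕ) (t : Finset ℕ) (p : ℕ → F) :
    cyl Y (insert j t) p = {ω | Y j ω = p j} ∩ cyl Y t p := by
  simp [cyl, Set.biInter_insert]

lemma cyl_congr (Y : ℕ → Ω → F) (t : Finset ℕ) {p q : ℕ → F} (h : ∀ i ∈ t, p i = q i) :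
    cyl Y t p = cyl Y t q := by
  unfold cyl
  exact Set.iInter₂_congr fun i hi => by rw [h i hi]

lemma cyl_union (Y : ℕ → Ω → F) (s t : Finset ℕ) (p : ℕ → F) :
    cyl Y (s ∪ t) p = cyl Y s p ∩ cyl Y t p := by
  ext ω
  simp only [cyl, Set.mem_iInter, Set.mem_inter_iff, Finset.mem_union]
  constructor
  · intro h; exact ⟨fun i hi => h i (Or.inl hi), fun i hi => h i (Or.inr hi)⟩
  · rintro ⟨h1, h2⟩ i hi; cases hi with
    | inl h => exact h1 i h
    | inr h => exact h2 i h

lemma cyl_subset_ev (Y : ℕ → Ω → F) {t : Finset ℕ} {j : ℕ} (hj : j ∈ t) (p : ℕ → F) :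
    cyl Y t p ⊆ {ω | Y j ω = p j} := by
  intro ω hω
  exact Set.mem_iInter₂.mp hω j hj

/-- fiber-sum decomposition of a measurable event along the a.s. finite range of `Y i` -/
lemma sum_fiber (P : Measure Ω) {Y : ℕ → Ω → F} (hY : ∀ n, Measurable (Y n))
    (L : Finset F) {i : ℕ} (hL : ∀ᵐ ω ∂P, Y i ω ∈ L) {A : Set Ω} (hA : MeasurableSet A) :
    P A = ∑ y ∈ L, P (A ∩ {ω | Y i ω = y}) := by
  have hU : P (⋃ y ∈ L, {ω | Y i ω = y})ᶜ = 0 := by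
    have : (⋃ y ∈ L, {ω | Y i ω = y})ᶜ = {ω | ¬ Y i ω ∈ L} := by
      ext ω; simp
    rw [this]
    exact hL
  have h1 : P A = P (A ∩ ⋃ y ∈ (L : Set F), {ω | Y i ω = y}) :=
    (measure_inter_conull hU).symm
  rw [h1, Set.inter_iUnion₂]
  refine measure_biUnion_finset ?hd (fun y _ => hA.inter (measurableSet_ev hY i y))
  case hd =>
    intro y _ z _ hyz
    refine Set.disjoint_left.mpr fun ω hω hω' => hyz ?_
    have h1 : Y i ω = y := hω.2
    have h2 : Y i ω = z := hω'.2
    rw [← h1, h2]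

/-- generic extension lemma: an identity linear in a cylinder slot that holds for all
full cylinders on `v` holds for partial cylinders on subsets of `v`. -/
lemma fill (P : Measure Ω) {Y : ℕ → Ω → F} (hY : ∀ n, Measurable (Y n)) (L : ℕ → Finset F)
    (hL : ∀ i, ∀ᵐ ω ∂P, Y i ω ∈ L i)
    {E E' : Set Ω} (hE : MeasurableSet E) (hE' : MeasurableSet E') (a b : ℝ≥0∞)
    (v : Finset ℕ) :
    ∀ (c : ℕ) (u : Finset ℕ) (q : ℕ → F), u ⊆ v → (v \ u).card = c →
    (∀ q' : ℕ → F, (∀ i ∈ u, q' i = q i) →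
      P (E ∩ cyl Y v q') * a = P (E' ∩ cyl Y v q') * b) →
    P (E ∩ cyl Y u q) * a = P (E' ∩ cyl Y u q) * b := by
  intro c
  induction c with
  | zero =>
    intro u q huv hcard hfull
    have huv2 : u = v := by
      have h0 : v \ u = ∅ := Finset.card_eq_zero.mp hcard
      have := Finset.sdiff_eq_empty_iff_subset.mp h0
      exact Finset.Subset.antisymm huv this
    rw [huv2]
    exact hfull q fun _ _ => rfl
  | succ c ih =>
    intro u q huv hcard hfull
    obtain ⟨j, hj⟩ := Finset.card_pos.mp (by omega : 0 < (v \ u).card)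
    have hjv : j ∈ v := (Finset.mem_sdiff.mp hj).1
    have hju : j ∉ u := (Finset.mem_sdiff.mp hj).2
    have key : ∀ (W : Set Ω), MeasurableSet W →
        P (W ∩ cyl Y u q) =
          ∑ y ∈ L j, P (W ∩ cyl Y (insert j u) (Function.update q j y)) := by
      intro W hW
      rw [sum_fiber P hY (L j) (hL j) (hW.inter (measurableSet_cyl hY u q))]
      refine Finset.sum_congr rfl fun y _ => ?_
      congr 1
      rw [cyl_insert]
      have hcongr : cyl Y u (Function.update q j y) = cyl Y u q :=
        cyl_congr Y u fun i hi => Function.update_of_ne (by rintro rfl; exact hju hi) y q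
      rw [hcongr, Function.update_self]
      ext ω
      constructor
      · rintro ⟨⟨hw, hc⟩, hy⟩; exact ⟨hw, hy, hc⟩
      · rintro ⟨hw, hy, hc⟩; exact ⟨⟨hw, hc⟩, hy⟩
    rw [key E hE, key E' hE', Finset.sum_mul, Finset.sum_mul]
    refine Finset.sum_congr rfl fun y _ => ?_
    refine ih (insert j u) (Function.update q j y) (Finset.insert_subset hjv huv) ?_ ?_
    · rw [Finset.sdiff_insert]
      rw [Finset.card_erase_of_mem hj, hcard]
      omega
    · intro q' hq'
      refine hfull q' fun i hi => ?_
      have h1 := hq' i (Finset.mem_insert_of_mem hi)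
      rwa [Function.update_of_ne (by rintro rfl; exact hju hi) y q] at h1




/-- one-step Markov property for partial past cylinders pinning time `M` -/
lemma one_step (P : Measure Ω) {Y : ℕ → Ω → F} (hY : ∀ n, Measurable (Y n))
    (L : ℕ → Finset F) (hL : ∀ i, ∀ᵐ ω ∂P, Y i ω ∈ L i)
    (hM : ∀ (M : ℕ) (w : F) (p : ℕ → F),
      P (cyl Y (Finset.range (M+1)) p ∩ {ω | Y (M+1) ω = w}) * P {ω | Y M ω = p M}
      = P ({ω | Y M ω = p M} ∩ {ω | Y (M+1) ω = w}) * P (cyl Y (Finset.range (M+1)) p))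
    (M : ℕ) (u : Finset ℕ) (q : ℕ → F) (w : F)
    (hu : u ⊆ Finset.range (M+1)) (hMu : M ∈ u) :
    P (cyl Y u q ∩ {ω | Y (M+1) ω = w}) * P {ω | Y M ω = q M}
    = P ({ω | Y M ω = q M} ∩ {ω | Y (M+1) ω = w}) * P (cyl Y u q) := by
  have h := fill P hY L hL (measurableSet_ev hY (M+1) w) MeasurableSet.univ
    (P {ω | Y M ω = q M}) (P ({ω | Y M ω = q M} ∩ {ω | Y (M+1) ω = w}))
    (Finset.range (M+1)) ((Finset.range (M+1)) \ u).card u q hu rfl ?_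
  · rw [Set.inter_comm (cyl Y u q) {ω | Y (M+1) ω = w}, h, Set.univ_inter,
      mul_comm (P (cyl Y u q))]
  · intro q' hq'
    have hqM : q' M = q M := hq' M hMu
    have h2 := hM M w q'
    rw [hqM] at h2
    rw [Set.inter_comm {ω | Y (M+1) ω = w} (cyl Y (Finset.range (M+1)) q'), Set.univ_inter,
      mul_comm (P (cyl Y (Finset.range (M+1)) q'))]
    exact h2

/-- Markov property: full past cylinder vs contiguous future block -/
lemma core (P : Measure Ω) [IsProbabilityMeasure P] {Y : ℕ → Ω → F}
    (hY : ∀ n, Measurable (Y n))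
    (L : ℕ → Finset F) (hL : ∀ i, ∀ᵐ ω ∂P, Y i ω ∈ L i)
    (hM : ∀ (M : ℕ) (w : F) (p : ℕ → F),
      P (cyl Y (Finset.range (M+1)) p ∩ {ω | Y (M+1) ω = w}) * P {ω | Y M ω = p M}
      = P ({ω | Y M ω = p M} ∩ {ω | Y (M+1) ω = w}) * P (cyl Y (Finset.range (M+1)) p))
    (M : ℕ) :
    ∀ (d : ℕ) (p y : ℕ → F),
    P (cyl Y (Finset.range (M+1)) p ∩ cyl Y (Finset.Icc (M+1) (M+d)) y) * P {ω | Y M ω = p M}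
    = P ({ω | Y M ω = p M} ∩ cyl Y (Finset.Icc (M+1) (M+d)) y)
        * P (cyl Y (Finset.range (M+1)) p) := by
  intro d
  induction d with
  | zero =>
    intro p y
    rw [show Finset.Icc (M+1) (M+0) = ∅ from Finset.Icc_eq_empty (by omega), cyl_empty,
      Set.inter_univ, Set.inter_univ, mul_comm]
  | succ d ih =>
    intro p y
    set r : ℕ → F := fun i => if i ≤ M then p i else y i with hr
    have hIcc : Finset.Icc (M+1) (M+(d+1)) = insert (M+d+1) (Finset.Icc (M+1) (M+d)) := by
      ext i; simp only [Finset.mem_Icc, Finset.mem_insert]; omega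
    have hcylsucc : cyl Y (Finset.Icc (M+1) (M+(d+1))) y
        = cyl Y (Finset.Icc (M+1) (M+d)) y ∩ {ω | Y (M+d+1) ω = y (M+d+1)} := by
      rw [hIcc, cyl_insert, Set.inter_comm]
    have hA : cyl Y (Finset.range (M+1) ∪ Finset.Icc (M+1) (M+d)) r
        = cyl Y (Finset.range (M+1)) p ∩ cyl Y (Finset.Icc (M+1) (M+d)) y := by
      rw [cyl_union]
      congr 1
      · refine cyl_congr Y _ fun i hi => ?_
        have : i ≤ M := by simpa [Nat.lt_succ_iff] using Finset.mem_range.mp hi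
        simp [hr, this]
      · refine cyl_congr Y _ fun i hi => ?_
        have : ¬ i ≤ M := by
          have := (Finset.mem_Icc.mp hi).1; omega
        simp [hr, this]
    have hB : cyl Y (Finset.Icc M (M+d)) r
        = {ω | Y M ω = p M} ∩ cyl Y (Finset.Icc (M+1) (M+d)) y := by
      have h0 : Finset.Icc M (M+d) = insert M (Finset.Icc (M+1) (M+d)) := by
        ext i; simp only [Finset.mem_Icc, Finset.mem_insert]; omega
      rw [h0, cyl_insert]
      congr 1
      · have : r M = p M := by simp [hr]
        rw [this]
      · refine cyl_congr Y _ fun i hi => ?_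
        have : ¬ i ≤ M := by
          have := (Finset.mem_Icc.mp hi).1; omega
        simp [hr, this]
    have ha := one_step P hY L hL hM (M+d)
      (Finset.range (M+1) ∪ Finset.Icc (M+1) (M+d)) r (y (M+d+1))
      (by intro i hi
          simp only [Finset.mem_union, Finset.mem_range, Finset.mem_Icc] at hi
          simp only [Finset.mem_range]; omega)
      (by simp only [Finset.mem_union, Finset.mem_range, Finset.mem_Icc]; omega)
    have hb := one_step P hY L hL hM (M+d) (Finset.Icc M (M+d)) r (y (M+d+1))
      (by intro i hi
          simp only [Finset.mem_Icc] at hi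
          simp only [Finset.mem_range]; omega)
      (by simp only [Finset.mem_Icc]; omega)
    have ihr := ih p y
    rw [← hA, ← hB] at ihr
    by_cases hβ : P {ω | Y (M+d) ω = r (M+d)} = 0
    · have hAnull : P (cyl Y (Finset.range (M+1)) p ∩ cyl Y (Finset.Icc (M+1) (M+(d+1))) y)
          = 0 := by
        refine measure_mono_null ?_ hβ
        rw [hcylsucc, ← Set.inter_assoc, ← hA]
        refine (Set.inter_subset_left).trans (cyl_subset_ev Y ?_ r)
        simp only [Finset.mem_union, Finset.mem_range, Finset.mem_Icc]
        omega
      have hBnull : P ({ω | Y M ω = p M} ∩ cyl Y (Finset.Icc (M+1) (M+(d+1))) y) = 0 := by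
        refine measure_mono_null ?_ hβ
        rw [hcylsucc, ← Set.inter_assoc, ← hB]
        refine (Set.inter_subset_left).trans (cyl_subset_ev Y ?_ r)
        simp only [Finset.mem_Icc]
        omega
      rw [hAnull, hBnull, zero_mul, zero_mul]
    · apply enn_cancel_right hβ (measure_ne_top P _)
      have e1 : cyl Y (Finset.range (M+1)) p ∩ cyl Y (Finset.Icc (M+1) (M+(d+1))) y
          = cyl Y (Finset.range (M+1) ∪ Finset.Icc (M+1) (M+d)) r
              ∩ {ω | Y (M+d+1) ω = y (M+d+1)} := by
        rw [hcylsucc, ← Set.inter_assoc, ← hA]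
      have e2 : {ω | Y M ω = p M} ∩ cyl Y (Finset.Icc (M+1) (M+(d+1))) y
          = cyl Y (Finset.Icc M (M+d)) r ∩ {ω | Y (M+d+1) ω = y (M+d+1)} := by
        rw [hcylsucc, ← Set.inter_assoc, ← hB]
      rw [e1, e2]
      set A' := cyl Y (Finset.range (M+1) ∪ Finset.Icc (M+1) (M+d)) r
      set B' := cyl Y (Finset.Icc M (M+d)) r
      set Ew := {ω | Y (M+d+1) ω = y (M+d+1)}
      set β := P {ω | Y (M+d) ω = r (M+d)}
      set γ := P ({ω | Y (M+d) ω = r (M+d)} ∩ Ew)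
      calc P (A' ∩ Ew) * P {ω | Y M ω = p M} * β
          = (P (A' ∩ Ew) * β) * P {ω | Y M ω = p M} := by ring
        _ = (γ * P A') * P {ω | Y M ω = p M} := by rw [ha]
        _ = γ * (P A' * P {ω | Y M ω = p M}) := by ring
        _ = γ * (P B' * P (cyl Y (Finset.range (M+1)) p)) := by rw [ihr]
        _ = (γ * P B') * P (cyl Y (Finset.range (M+1)) p) := by ring
        _ = (P (B' ∩ Ew) * β) * P (cyl Y (Finset.range (M+1)) p) := by rw [hb]
        _ = P (B' ∩ Ew) * P (cyl Y (Finset.range (M+1)) p) * β := by ring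

/-- Markov property: partial past cylinder pinning `M` vs contiguous future block -/
lemma past_future (P : Measure Ω) [IsProbabilityMeasure P] {Y : ℕ → Ω → F}
    (hY : ∀ n, Measurable (Y n))
    (L : ℕ → Finset F) (hL : ∀ i, ∀ᵐ ω ∂P, Y i ω ∈ L i)
    (hM : ∀ (M : ℕ) (w : F) (p : ℕ → F),
      P (cyl Y (Finset.range (M+1)) p ∩ {ω | Y (M+1) ω = w}) * P {ω | Y M ω = p M}
      = P ({ω | Y M ω = p M} ∩ {ω | Y (M+1) ω = w}) * P (cyl Y (Finset.range (M+1)) p))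
    (M d : ℕ) (u : Finset ℕ) (q y : ℕ → F)
    (hu : u ⊆ Finset.range (M+1)) (hMu : M ∈ u) :
    P (cyl Y u q ∩ cyl Y (Finset.Icc (M+1) (M+d)) y) * P {ω | Y M ω = q M}
    = P ({ω | Y M ω = q M} ∩ cyl Y (Finset.Icc (M+1) (M+d)) y) * P (cyl Y u q) := by
  have h := fill P hY L hL (measurableSet_cyl hY (Finset.Icc (M+1) (M+d)) y)
    MeasurableSet.univ
    (P {ω | Y M ω = q M}) (P ({ω | Y M ω = q M} ∩ cyl Y (Finset.Icc (M+1) (M+d)) y))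
    (Finset.range (M+1)) ((Finset.range (M+1)) \ u).card u q hu rfl ?_
  · rw [Set.inter_comm (cyl Y u q), h, Set.univ_inter, mul_comm (P (cyl Y u q))]
  · intro q' hq'
    have hqM : q' M = q M := hq' M hMu
    have h2 := core P hY L hL hM M d q' y
    rw [hqM] at h2
    rw [Set.inter_comm (cyl Y (Finset.Icc (M+1) (M+d)) y), Set.univ_inter,
      mul_comm (P (cyl Y (Finset.range (M+1)) q'))]
    exact h2

/-- conditional independence of `{Y M = z}` and a future partial cylinder given `Y (M+1)` -/
lemma cond_indep_cyl (P : Measure Ω) [IsProbabilityMeasure P] {Y : ℕ → Ω → F}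
    (hY : ∀ n, Measurable (Y n))
    (L : ℕ → Finset F) (hL : ∀ i, ∀ᵐ ω ∂P, Y i ω ∈ L i)
    (hM : ∀ (M : ℕ) (w : F) (p : ℕ → F),
      P (cyl Y (Finset.range (M+1)) p ∩ {ω | Y (M+1) ω = w}) * P {ω | Y M ω = p M}
      = P ({ω | Y M ω = p M} ∩ {ω | Y (M+1) ω = w}) * P (cyl Y (Finset.range (M+1)) p))
    (M : ℕ) (z w : F) (t : Finset ℕ) (q : ℕ → F) (ht : ∀ i ∈ t, M + 1 ≤ i) :
    P ({ω | Y M ω = z} ∩ {ω | Y (M+1) ω = w} ∩ cyl Y t q) * P {ω | Y (M+1) ω = w}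
    = P ({ω | Y (M+1) ω = w} ∩ cyl Y t q) * P ({ω | Y M ω = z} ∩ {ω | Y (M+1) ω = w}) := by
  by_cases hcase : M + 1 ∈ t ∧ q (M+1) ≠ w
  · -- contradictory pin: both sides vanish
    obtain ⟨hmem, hne⟩ := hcase
    have hdisj : {ω | Y (M+1) ω = w} ∩ cyl Y t q = ∅ := by
      rw [Set.eq_empty_iff_forall_notMem]
      rintro ω ⟨hw, hc⟩
      exact hne ((cyl_subset_ev Y hmem q hc).symm.trans hw)
    have h1 : {ω | Y M ω = z} ∩ {ω | Y (M+1) ω = w} ∩ cyl Y t q = ∅ := by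
      rw [Set.inter_assoc, hdisj, Set.inter_empty]
    rw [h1, hdisj, measure_empty, zero_mul, zero_mul]
  · -- absorb a possible pin at M+1
    set t' := t.erase (M+1) with ht'
    have ht'sub : ∀ i ∈ t', M + 2 ≤ i := by
      intro i hi
      have h1 := Finset.mem_of_mem_erase hi
      have h2 := Finset.ne_of_mem_erase hi
      have := ht i h1; omega
    have hset : {ω | Y (M+1) ω = w} ∩ cyl Y t q = {ω | Y (M+1) ω = w} ∩ cyl Y t' q := by
      by_cases hmem : M + 1 ∈ t
      · have hq : q (M+1) = w := by
          by_contra hne; exact hcase ⟨hmem, hne⟩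
        ext ω
        simp only [Set.mem_inter_iff, Set.mem_setOf_eq, cyl, Set.mem_iInter]
        constructor
        · rintro ⟨h1, h2⟩
          exact ⟨h1, fun i hi => h2 i (Finset.mem_of_mem_erase hi)⟩
        · rintro ⟨h1, h2⟩
          refine ⟨h1, fun i hi => ?_⟩
          by_cases hij : i = M + 1
          · subst hij; rw [h1, hq]
          · exact h2 i (Finset.mem_erase.mpr ⟨hij, hi⟩)
      · rw [ht', Finset.erase_eq_of_notMem hmem]
    -- choose a bounding interval for t'
    set d := t'.sup id with hd
    have ht'' : t' ⊆ Finset.Icc (M+2) (M+1+d) := by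
      intro i hi
      have h1 := ht'sub i hi
      have h2 : i ≤ d := Finset.le_sup (f := id) hi
      simp only [Finset.mem_Icc]; omega
    have key : P (({ω | Y M ω = z} ∩ {ω | Y (M+1) ω = w}) ∩ cyl Y t' q)
          * P {ω | Y (M+1) ω = w}
        = P ({ω | Y (M+1) ω = w} ∩ cyl Y t' q)
          * P ({ω | Y M ω = z} ∩ {ω | Y (M+1) ω = w}) := by
      refine fill P hY L hL
        ((measurableSet_ev hY M z).inter (measurableSet_ev hY (M+1) w))
        (measurableSet_ev hY (M+1) w)
        (P {ω | Y (M+1) ω = w}) (P ({ω | Y M ω = z} ∩ {ω | Y (M+1) ω = w}))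
        (Finset.Icc (M+2) (M+1+d)) _ t' q ht'' rfl ?_
      intro q' hq'
      set r : ℕ → F := fun i => if i = M then z else w with hrr
      have hcylr : cyl Y ({M, M+1} : Finset ℕ) r
          = {ω | Y M ω = z} ∩ {ω | Y (M+1) ω = w} := by
        have h1 : ({M, M+1} : Finset ℕ) = insert M ({M+1} : Finset ℕ) := rfl
        rw [h1, cyl_insert]
        congr 1
        · have : r M = z := by simp [hrr]
          rw [this]
        · have h2 : ({M+1} : Finset ℕ) = insert (M+1) (∅ : Finset ℕ) := rfl
          rw [h2, cyl_insert, cyl_empty, Set.inter_univ]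
          have : r (M+1) = w := by simp [hrr]
          rw [this]
      have h3 := past_future P hY L hL hM (M+1) d ({M, M+1} : Finset ℕ) r q'
        (by intro i hi
            simp only [Finset.mem_insert, Finset.mem_singleton] at hi
            simp only [Finset.mem_range]; omega)
        (by simp)
      have hr1 : r (M+1) = w := by simp [hrr]
      rw [hcylr, hr1] at h3
      have harith : M + 1 + 1 = M + 2 := rfl
      rw [harith] at h3
      exact h3
    have hfin1 : {ω | Y M ω = z} ∩ {ω | Y (M+1) ω = w} ∩ cyl Y t q
        = ({ω | Y M ω = z} ∩ {ω | Y (M+1) ω = w}) ∩ cyl Y t' q := by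
      rw [Set.inter_assoc, hset, ← Set.inter_assoc]
    rw [hfin1, hset, key]

/-- replace general measurable fiber constraints by singleton cylinders -/
lemma bfill (P : Measure Ω) [IsProbabilityMeasure P] {Y : ℕ → Ω → F}
    (hY : ∀ n, Measurable (Y n)) [Nonempty F]
    (L : ℕ → Finset F) (hL : ∀ i, ∀ᵐ ω ∂P, Y i ω ∈ L i) :
    ∀ (t : Finset ℕ) (B : ℕ → Set F), (∀ i ∈ t, MeasurableSet (B i)) →
    ∀ (E E' : Set Ω), MeasurableSet E → MeasurableSet E' → ∀ (a b : ℝ≥0∞),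
    (∀ q : ℕ → F, P (E ∩ cyl Y t q) * a = P (E' ∩ cyl Y t q) * b) →
    P (E ∩ ⋂ i ∈ t, Y i ⁻¹' B i) * a = P (E' ∩ ⋂ i ∈ t, Y i ⁻¹' B i) * b := by
  intro t
  induction t using Finset.induction with
  | empty =>
    intro B hB E E' hE hE' a b hq
    have h := hq (fun _ => Classical.arbitrary F)
    simpa [cyl_empty] using h
  | @insert j t hj ih =>
    intro B hB E E' hE hE' a b hq
    classical
    have hR : MeasurableSet (⋂ i ∈ t, Y i ⁻¹' B i) :=
      Finset.measurableSet_biInter t fun i hi =>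
        (hY i) (hB i (Finset.mem_insert_of_mem hi))
    have hsplit : ∀ (W : Set Ω), MeasurableSet W →
        P (W ∩ ⋂ i ∈ insert j t, Y i ⁻¹' B i)
        = ∑ y ∈ L j, (if y ∈ B j then P ((W ∩ {ω | Y j ω = y}) ∩ ⋂ i ∈ t, Y i ⁻¹' B i)
            else 0) := by
      intro W hW
      rw [Finset.set_biInter_insert]
      have hmeas : MeasurableSet (W ∩ (Y j ⁻¹' B j ∩ ⋂ i ∈ t, Y i ⁻¹' B i)) :=
        hW.inter (((hY j) (hB j (Finset.mem_insert_self j t))).inter hR)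
      rw [sum_fiber P hY (L j) (hL j) hmeas]
      refine Finset.sum_congr rfl fun y _ => ?_
      by_cases hyB : y ∈ B j
      · rw [if_pos hyB]
        congr 1
        ext ω
        simp only [Set.mem_inter_iff, Set.mem_preimage, Set.mem_setOf_eq]
        constructor
        · rintro ⟨⟨hw, _, hrest⟩, hy⟩; exact ⟨⟨hw, hy⟩, hrest⟩
        · rintro ⟨⟨hw, hy⟩, hrest⟩; exact ⟨⟨hw, by rw [hy]; exact hyB, hrest⟩, hy⟩
      · rw [if_neg hyB]
        have hempty : (W ∩ (Y j ⁻¹' B j ∩ ⋂ i ∈ t, Y i ⁻¹' B i)) ∩ {ω | Y j ω = y}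
            = ∅ := by
          rw [Set.eq_empty_iff_forall_notMem]
          rintro ω ⟨⟨_, hyB', _⟩, hy⟩
          rw [Set.mem_preimage, hy] at hyB'
          exact hyB hyB'
        rw [hempty, measure_empty]
    rw [hsplit E hE, hsplit E' hE', Finset.sum_mul, Finset.sum_mul]
    refine Finset.sum_congr rfl fun y _ => ?_
    by_cases hyB : y ∈ B j
    · rw [if_pos hyB, if_pos hyB]
      refine ih B (fun i hi => hB i (Finset.mem_insert_of_mem hi))
        (E ∩ {ω | Y j ω = y}) (E' ∩ {ω | Y j ω = y})
        (hE.inter (measurableSet_ev hY j y)) (hE'.inter (measurableSet_ev hY j y)) a b ?_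
      intro q
      have h := hq (Function.update q j y)
      have hc : cyl Y (insert j t) (Function.update q j y)
          = {ω | Y j ω = y} ∩ cyl Y t q := by
        rw [cyl_insert, Function.update_self]
        congr 1
        exact cyl_congr Y t fun i hi =>
          Function.update_of_ne (by rintro rfl; exact hj hi) y q
      rw [hc] at h
      rw [Set.inter_assoc, Set.inter_assoc]
      exact h
    · rw [if_neg hyB, if_neg hyB, zero_mul, zero_mul]

end CMCAux
open CMCAux in
/-- For a weakly irreducible CMC with Martin kernel K and fixed
x ∈ 𝔽_k, the process (K(x,Y_n))_{n>k} is a backwards martingale w.r.t.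
𝒢_n = σ(Y_m : m ≥ n): E[K(x,Y_n) | 𝒢_{n+1}] = K(x,Y_{n+1}) for n > k. -/
theorem martin_kernel_backwards_martingale
    {Ω F : Type*} [MeasurableSpace Ω] [MeasurableSpace F] [MeasurableSingletonClass F]
    (P : Measure Ω) [IsProbabilityMeasure P]
    (deg : F → ℕ) (hfin : ∀ n, {x : F | deg x = n}.Finite)
    (e : F) (hdeg_e : deg e = 0) (hF0 : ∀ x : F, deg x = 0 → x = e)
    (Y : ℕ → Ω → F) (hY : ∀ n, Measurable (Y n))
    (hadapted : ∀ n, ∀ᵐ ω ∂P, deg (Y n ω) = n)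
    (hY0 : ∀ᵐ ω ∂P, Y 0 ω = e)
    (hirr : ∀ (n : ℕ) (x : F), deg x = n → 0 < P {ω | Y n ω = x})
    (hMarkov : ∀ (n : ℕ) (z : F) (path : ℕ → F),
      P ((⋂ i ∈ Finset.range (n + 1), {ω | Y i ω = path i}) ∩ {ω | Y (n + 1) ω = z})
          * P {ω | Y n ω = path n}
        = P ({ω | Y n ω = path n} ∩ {ω | Y (n + 1) ω = z})
          * P (⋂ i ∈ Finset.range (n + 1), {ω | Y i ω = path i}))
    -- the Martin kernel: K(x,y) = P(Y_n=y | Y_m=x)/P(Y_n=y) for deg x ≤ deg y, else 0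
    (K : F → F → ℝ)
    (hK : ∀ x y : F, deg x ≤ deg y →
      K x y = ((P ({ω | Y (deg x) ω = x} ∩ {ω | Y (deg y) ω = y})).toReal
                / (P {ω | Y (deg x) ω = x}).toReal)
              / (P {ω | Y (deg y) ω = y}).toReal)
    (hK0 : ∀ x y : F, ¬ deg x ≤ deg y → K x y = 0)
    -- the backwards (tail) filtration 𝒢_n = σ(Y_m : m ≥ n)
    (𝒢 : ℕ → MeasurableSpace Ω)
    (h𝒢 : ∀ n, 𝒢 n = ⨆ m ∈ Set.Ici n, MeasurableSpace.comap (Y m) inferInstance)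
    (x : F) (k : ℕ) (hx : deg x = k) :
    ∀ n : ℕ, k < n →
      P[(fun ω => K x (Y n ω)) | 𝒢 (n + 1)] =ᵐ[P] fun ω => K x (Y (n + 1) ω) := by
  classical
  have hNE : Nonempty F := ⟨e⟩
  intro n hn
  -- levels
  set L : ℕ → Finset F := fun i => (hfin i).toFinset with hLdef
  have hLmem : ∀ (i : ℕ) (z : F), z ∈ L i ↔ deg z = i := fun i z => (hfin i).mem_toFinset
  have hL : ∀ i, ∀ᵐ ω ∂P, Y i ω ∈ L i := fun i =>
    (hadapted i).mono fun ω h => (hLmem i _).mpr h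
  have hMcyl : ∀ (M : ℕ) (w : F) (p : ℕ → F),
      P (cyl Y (Finset.range (M+1)) p ∩ {ω | Y (M+1) ω = w}) * P {ω | Y M ω = p M}
      = P ({ω | Y M ω = p M} ∩ {ω | Y (M+1) ω = w}) * P (cyl Y (Finset.range (M+1)) p) :=
    fun M w p => hMarkov M w p
  -- kernel values in ℝ≥0∞
  set c : F → ℝ≥0∞ := fun z => ENNReal.ofReal (K x z) with hcdef
  have hxpos : P {ω | Y k ω = x} ≠ 0 := (hirr k x hx).ne'
  have hxfin : P {ω | Y k ω = x} ≠ ⊤ := measure_ne_top P _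
  have hKnn : ∀ z : F, 0 ≤ K x z := by
    intro z
    by_cases h : deg x ≤ deg z
    · rw [hK x z h]
      positivity
    · rw [hK0 x z h]
  have hCB : ∀ (i : ℕ) (z : F), deg z = i → k ≤ i →
      c z * (P {ω | Y k ω = x} * P {ω | Y i ω = z})
        = P ({ω | Y k ω = x} ∩ {ω | Y i ω = z}) := by
    intro i z hz hki
    have hzpos : P {ω | Y i ω = z} ≠ 0 := (hirr i z hz).ne'
    have hzfin : P {ω | Y i ω = z} ≠ ⊤ := measure_ne_top P _
    have hKv := hK x z (by rw [hx, hz]; exact hki)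
    rw [hx, hz] at hKv
    have htd : K x z = ((P ({ω | Y k ω = x} ∩ {ω | Y i ω = z}) / P {ω | Y k ω = x})
        / P {ω | Y i ω = z}).toReal := by
      rw [ENNReal.toReal_div, ENNReal.toReal_div]; exact hKv
    have hne : (P ({ω | Y k ω = x} ∩ {ω | Y i ω = z}) / P {ω | Y k ω = x})
        / P {ω | Y i ω = z} ≠ ⊤ := by
      refine (ENNReal.div_lt_top ?_ hzpos).ne
      exact (ENNReal.div_lt_top (measure_ne_top P _) hxpos).ne
    have hcz : c z = (P ({ω | Y k ω = x} ∩ {ω | Y i ω = z}) / P {ω | Y k ω = x})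
        / P {ω | Y i ω = z} := by
      rw [hcdef]; simp only
      rw [htd, ENNReal.ofReal_toReal hne]
    rw [hcz]
    calc (P ({ω | Y k ω = x} ∩ {ω | Y i ω = z}) / P {ω | Y k ω = x} / P {ω | Y i ω = z})
          * (P {ω | Y k ω = x} * P {ω | Y i ω = z})
        = (P ({ω | Y k ω = x} ∩ {ω | Y i ω = z}) / P {ω | Y k ω = x} / P {ω | Y i ω = z}
            * P {ω | Y i ω = z}) * P {ω | Y k ω = x} := by ring
      _ = (P ({ω | Y k ω = x} ∩ {ω | Y i ω = z}) / P {ω | Y k ω = x}) * P {ω | Y k ω = x} := by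
          rw [ENNReal.div_mul_cancel hzpos hzfin]
      _ = P ({ω | Y k ω = x} ∩ {ω | Y i ω = z}) := ENNReal.div_mul_cancel hxpos hxfin
  -- the simple-function versions of ω ↦ K x (Y i ω)
  set g : ℕ → Ω → ℝ := fun i ω => ∑ z ∈ L i, (if Y i ω = z then K x z else 0) with hgdef
  have hgval : ∀ (i : ℕ) (ω : Ω), g i ω = if Y i ω ∈ L i then K x (Y i ω) else 0 := by
    intro i ω
    rw [hgdef]
    exact Finset.sum_ite_eq (L i) (Y i ω) fun z => K x z
  have hgmble : ∀ i, Measurable (g i) := by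
    intro i
    rw [hgdef]
    exact Finset.measurable_sum _ fun z _ =>
      Measurable.ite (measurableSet_ev hY i z) measurable_const measurable_const
  have hgnn : ∀ (i : ℕ) (ω : Ω), 0 ≤ g i ω := by
    intro i ω
    rw [hgval]
    split
    · exact hKnn _
    · exact le_rfl
  have hint : ∀ i, Integrable (g i) P := by
    intro i
    rw [hgdef]
    refine integrable_finset_sum _ fun z _ => ?_
    have heq : (fun ω => if Y i ω = z then K x z else 0)
        = Set.indicator {ω | Y i ω = z} fun _ => K x z := by
      funext ω
      rw [Set.indicator_apply]
      rfl
    rw [heq]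
    exact (integrable_const (K x z)).indicator (measurableSet_ev hY i z)
  -- densities
  set ν : ℕ → Measure Ω := fun i => P.withDensity fun ω => ENNReal.ofReal (g i ω) with hνdef
  have hNU : ∀ (i : ℕ) (s : Set Ω), MeasurableSet s →
      ν i s = ∑ z ∈ L i, c z * P ({ω | Y i ω = z} ∩ s) := by
    intro i s hs
    rw [hνdef]
    simp only
    rw [withDensity_apply _ hs]
    calc ∫⁻ ω in s, ENNReal.ofReal (g i ω) ∂P
        = ∫⁻ ω in s, ∑ z ∈ L i, Set.indicator {ω' | Y i ω' = z} (fun _ => c z) ω ∂P := by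
          refine lintegral_congr fun ω => ?_
          have hind : ∀ z : F, Set.indicator {ω' | Y i ω' = z} (fun _ => c z) ω
              = if Y i ω = z then c z else 0 := fun z => by
            simp [Set.indicator_apply, Set.mem_setOf_eq]
          simp only [hind]
          rw [Finset.sum_ite_eq (L i) (Y i ω) fun z => c z, hgval i ω]
          split_ifs with h
          · rfl
          · exact ENNReal.ofReal_zero
      _ = ∑ z ∈ L i, ∫⁻ ω in s, Set.indicator {ω' | Y i ω' = z} (fun _ => c z) ω ∂P :=
          lintegral_finset_sum _ fun z _ =>
            measurable_const.indicator (measurableSet_ev hY i z)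
      _ = ∑ z ∈ L i, c z * P ({ω | Y i ω = z} ∩ s) := by
          refine Finset.sum_congr rfl fun z _ => ?_
          rw [lintegral_indicator_const (measurableSet_ev hY i z),
            Measure.restrict_apply (measurableSet_ev hY i z)]
  
  -- set-integral / density link
  have hSI : ∀ (i : ℕ) (s : Set Ω), MeasurableSet s →
      ∫ ω in s, g i ω ∂P = (ν i s).toReal := by
    intro i s hs
    rw [integral_eq_lintegral_of_nonneg_ae
      (Filter.Eventually.of_forall fun ω => hgnn i ω) (hgmble i).aestronglyMeasurable]
    congr 1
    rw [hνdef]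
    simp only
    rw [withDensity_apply _ hs]
  -- total mass one
  have hsum_x : ∀ i : ℕ, ∑ z ∈ L i, P ({ω | Y k ω = x} ∩ {ω | Y i ω = z})
      = P {ω | Y k ω = x} := fun i =>
    (sum_fiber P hY (L i) (hL i) (measurableSet_ev hY k x)).symm
  have hUNITY : ∀ i : ℕ, k ≤ i → ν i Set.univ = 1 := by
    intro i hki
    rw [hNU i _ MeasurableSet.univ]
    apply enn_cancel_right hxpos hxfin
    rw [Finset.sum_mul, one_mul]
    calc ∑ z ∈ L i, c z * P ({ω | Y i ω = z} ∩ Set.univ) * P {ω | Y k ω = x}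
        = ∑ z ∈ L i, P ({ω | Y k ω = x} ∩ {ω | Y i ω = z}) := by
          refine Finset.sum_congr rfl fun z hz => ?_
          rw [Set.inter_univ]
          rw [show c z * P {ω | Y i ω = z} * P {ω | Y k ω = x}
              = c z * (P {ω | Y k ω = x} * P {ω | Y i ω = z}) by ring]
          exact hCB i z ((hLmem i z).mp hz) hki
      _ = P {ω | Y k ω = x} := hsum_x i
  -- harmonicity of the Martin kernel
  have hH : ∀ w : F, deg w = n + 1 →
      ∑ z ∈ L n, c z * P ({ω | Y n ω = z} ∩ {ω | Y (n+1) ω = w})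
        = c w * P {ω | Y (n+1) ω = w} := by
    intro w hw
    apply enn_cancel_right hxpos hxfin
    rw [Finset.sum_mul]
    have hterm : ∀ z ∈ L n,
        c z * P ({ω | Y n ω = z} ∩ {ω | Y (n+1) ω = w}) * P {ω | Y k ω = x}
        = P (({ω | Y k ω = x} ∩ {ω | Y n ω = z}) ∩ {ω | Y (n+1) ω = w}) := by
      intro z hz
      have hdz : deg z = n := (hLmem n z).mp hz
      have hzpos : P {ω | Y n ω = z} ≠ 0 := (hirr n z hdz).ne'
      set q : ℕ → F := fun i => if i = k then x else z with hq
      have hqn : q n = z := by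
        rw [hq]; simp only
        rw [if_neg (by omega)]
      have hqk : q k = x := by rw [hq]; simp
      have hcylq : cyl Y ({k, n} : Finset ℕ) q = {ω | Y k ω = x} ∩ {ω | Y n ω = z} := by
        have h1 : ({k, n} : Finset ℕ) = insert k ({n} : Finset ℕ) := rfl
        have h2 : ({n} : Finset ℕ) = insert n (∅ : Finset ℕ) := rfl
        rw [h1, cyl_insert, h2, cyl_insert, cyl_empty, Set.inter_univ, hqn, hqk]
      have hii := one_step P hY L hL hMcyl n ({k, n} : Finset ℕ) q w
        (by intro i hi
            simp only [Finset.mem_insert, Finset.mem_singleton] at hi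
            simp only [Finset.mem_range]; omega)
        (by simp)
      rw [hcylq, hqn] at hii
      apply enn_cancel_right hzpos (measure_ne_top P _)
      calc c z * P ({ω | Y n ω = z} ∩ {ω | Y (n+1) ω = w}) * P {ω | Y k ω = x}
            * P {ω | Y n ω = z}
          = (c z * (P {ω | Y k ω = x} * P {ω | Y n ω = z}))
              * P ({ω | Y n ω = z} ∩ {ω | Y (n+1) ω = w}) := by ring
        _ = P ({ω | Y k ω = x} ∩ {ω | Y n ω = z})
              * P ({ω | Y n ω = z} ∩ {ω | Y (n+1) ω = w}) := by rw [hCB n z hdz hn.le]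
        _ = P ({ω | Y n ω = z} ∩ {ω | Y (n+1) ω = w})
              * P ({ω | Y k ω = x} ∩ {ω | Y n ω = z}) := by ring
        _ = P (({ω | Y k ω = x} ∩ {ω | Y n ω = z}) ∩ {ω | Y (n+1) ω = w})
              * P {ω | Y n ω = z} := hii.symm
    rw [Finset.sum_congr rfl hterm]
    have hsets : ∀ z : F, ({ω | Y k ω = x} ∩ {ω | Y n ω = z}) ∩ {ω | Y (n+1) ω = w}
        = ({ω | Y k ω = x} ∩ {ω | Y (n+1) ω = w}) ∩ {ω | Y n ω = z} := by
      intro z; ext ω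
      constructor
      · rintro ⟨⟨h1, h2⟩, h3⟩; exact ⟨⟨h1, h3⟩, h2⟩
      · rintro ⟨⟨h1, h3⟩, h2⟩; exact ⟨⟨h1, h2⟩, h3⟩
    calc ∑ z ∈ L n, P (({ω | Y k ω = x} ∩ {ω | Y n ω = z}) ∩ {ω | Y (n+1) ω = w})
        = ∑ z ∈ L n, P (({ω | Y k ω = x} ∩ {ω | Y (n+1) ω = w}) ∩ {ω | Y n ω = z}) := by
          refine Finset.sum_congr rfl fun z _ => ?_
          rw [hsets z]
      _ = P ({ω | Y k ω = x} ∩ {ω | Y (n+1) ω = w}) :=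
          (sum_fiber P hY (L n) (hL n)
            ((measurableSet_ev hY k x).inter (measurableSet_ev hY (n+1) w))).symm
      _ = c w * (P {ω | Y k ω = x} * P {ω | Y (n+1) ω = w}) := (hCB (n+1) w hw (by omega)).symm
      _ = c w * P {ω | Y (n+1) ω = w} * P {ω | Y k ω = x} := by ring
  -- the key computation on generating cylinder sets
  have hCYL : ∀ (t : Finset ℕ), (↑t ⊆ Set.Ici (n+1)) → ∀ B : ℕ → Set F,
      (∀ i ∈ t, MeasurableSet (B i)) →
      ν n (⋂ i ∈ t, Y i ⁻¹' B i) = ν (n+1) (⋂ i ∈ t, Y i ⁻¹' B i) := by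
    intro t htI B hB
    have hsmeas : MeasurableSet (⋂ i ∈ t, Y i ⁻¹' B i) :=
      Finset.measurableSet_biInter _ fun i hi => (hY i) (hB i hi)
    rw [hNU n _ hsmeas, hNU (n+1) _ hsmeas]
    set s := ⋂ i ∈ t, Y i ⁻¹' B i with hs
    have ht' : ∀ i ∈ t, n + 1 ≤ i := fun i hi => htI hi
    calc ∑ z ∈ L n, c z * P ({ω | Y n ω = z} ∩ s)
        = ∑ z ∈ L n, ∑ w ∈ L (n+1), c z * P (({ω | Y n ω = z} ∩ s) ∩ {ω | Y (n+1) ω = w}) := by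
          refine Finset.sum_congr rfl fun z _ => ?_
          rw [sum_fiber P hY (L (n+1)) (hL (n+1)) ((measurableSet_ev hY n z).inter hsmeas),
            Finset.mul_sum]
      _ = ∑ w ∈ L (n+1), ∑ z ∈ L n,
            c z * P (({ω | Y n ω = z} ∩ s) ∩ {ω | Y (n+1) ω = w}) := Finset.sum_comm
      _ = ∑ w ∈ L (n+1), c w * P ({ω | Y (n+1) ω = w} ∩ s) := by
          refine Finset.sum_congr rfl fun w hw => ?_
          have hdw : deg w = n + 1 := (hLmem (n+1) w).mp hw
          have hwpos : P {ω | Y (n+1) ω = w} ≠ 0 := (hirr (n+1) w hdw).ne'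
          have hwfin : P {ω | Y (n+1) ω = w} ≠ ⊤ := measure_ne_top P _
          apply enn_cancel_right hwpos hwfin
          rw [Finset.sum_mul]
          have hdag : ∀ z ∈ L n,
              c z * P (({ω | Y n ω = z} ∩ s) ∩ {ω | Y (n+1) ω = w}) * P {ω | Y (n+1) ω = w}
              = c z * (P ({ω | Y (n+1) ω = w} ∩ s)
                  * P ({ω | Y n ω = z} ∩ {ω | Y (n+1) ω = w})) := by
            intro z _
            have hbf := bfill P hY L hL t B hB
              ({ω | Y n ω = z} ∩ {ω | Y (n+1) ω = w}) {ω | Y (n+1) ω = w}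
              ((measurableSet_ev hY n z).inter (measurableSet_ev hY (n+1) w))
              (measurableSet_ev hY (n+1) w)
              (P {ω | Y (n+1) ω = w}) (P ({ω | Y n ω = z} ∩ {ω | Y (n+1) ω = w}))
              (fun q => cond_indep_cyl P hY L hL hMcyl n z w t q ht')
            have hreorder : ({ω | Y n ω = z} ∩ s) ∩ {ω | Y (n+1) ω = w}
                = ({ω | Y n ω = z} ∩ {ω | Y (n+1) ω = w}) ∩ s := by
              ext ω
              constructor
              · rintro ⟨⟨h1, h2⟩, h3⟩; exact ⟨⟨h1, h3⟩, h2⟩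
              · rintro ⟨⟨h1, h3⟩, h2⟩; exact ⟨⟨h1, h2⟩, h3⟩
            rw [mul_assoc, hreorder, hbf, mul_comm (P ({ω | Y (n+1) ω = w} ∩ s))]
          rw [Finset.sum_congr rfl hdag]
          calc ∑ z ∈ L n, c z * (P ({ω | Y (n+1) ω = w} ∩ s)
                  * P ({ω | Y n ω = z} ∩ {ω | Y (n+1) ω = w}))
              = P ({ω | Y (n+1) ω = w} ∩ s)
                  * ∑ z ∈ L n, c z * P ({ω | Y n ω = z} ∩ {ω | Y (n+1) ω = w}) := by
                rw [Finset.mul_sum]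
                refine Finset.sum_congr rfl fun z _ => ?_
                ring
            _ = P ({ω | Y (n+1) ω = w} ∩ s) * (c w * P {ω | Y (n+1) ω = w}) := by
                rw [hH w hdw]
            _ = c w * P ({ω | Y (n+1) ω = w} ∩ s) * P {ω | Y (n+1) ω = w} := by ring
  -- finiteness of the density measures
  have hfinν : ∀ i : ℕ, k ≤ i → IsFiniteMeasure (ν i) := by
    intro i hki
    refine ⟨?_⟩
    rw [hUNITY i hki]
    exact ENNReal.one_lt_top
  haveI hfn : IsFiniteMeasure (ν n) := hfinν n hn.le
  haveI hfn1 : IsFiniteMeasure (ν (n+1)) := hfinν (n+1) (by omega)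
  -- the tail σ-algebra and its generating π-system
  have hm : 𝒢 (n+1) ≤ (inferInstance : MeasurableSpace Ω) := by
    rw [h𝒢]
    exact iSup₂_le fun m _ => (hY m).comap_le
  set Csys : Set (Set Ω) := piiUnionInter
    (fun i => {s | MeasurableSet[MeasurableSpace.comap (Y i) inferInstance] s})
    (Set.Ici (n+1)) with hCsys
  have hgen : 𝒢 (n+1) = MeasurableSpace.generateFrom Csys := by
    rw [h𝒢, hCsys]
    exact (generateFrom_piiUnionInter_measurableSet
      (fun i => MeasurableSpace.comap (Y i) inferInstance) (Set.Ici (n+1))).symm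
  have hpi : IsPiSystem Csys := by
    rw [hCsys]
    exact isPiSystem_piiUnionInter _
      (fun i => @MeasurableSpace.isPiSystem_measurableSet Ω
        (MeasurableSpace.comap (Y i) inferInstance)) _
  have htrim : (ν n).trim hm = (ν (n+1)).trim hm := by
    refine MeasureTheory.ext_of_generate_finite Csys hgen hpi ?_ ?_
    · intro s hsC
      have hsm : MeasurableSet[𝒢 (n+1)] s := by
        rw [hgen]
        exact MeasurableSpace.measurableSet_generateFrom hsC
      rw [trim_measurableSet_eq hm hsm, trim_measurableSet_eq hm hsm]
      obtain ⟨t, htS, f, hf, rfl⟩ := hsC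
      have hBex : ∀ i, i ∈ t → ∃ B : Set F, MeasurableSet B ∧ Y i ⁻¹' B = f i := fun i hi =>
        MeasurableSpace.measurableSet_comap.mp (hf i hi)
      set B : ℕ → Set F := fun i => if h : i ∈ t then (hBex i h).choose else ∅ with hBdef
      have hBmeas : ∀ i ∈ t, MeasurableSet (B i) := by
        intro i hi
        rw [hBdef]
        simp only [dif_pos hi]
        exact (hBex i hi).choose_spec.1
      have hBeq : (⋂ i ∈ t, f i) = ⋂ i ∈ t, Y i ⁻¹' B i := by
        refine Set.iInter₂_congr fun i hi => ?_
        rw [hBdef]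
        simp only [dif_pos hi]
        exact ((hBex i hi).choose_spec.2).symm
      rw [hBeq]
      exact hCYL t htS B hBmeas
    · rw [trim_measurableSet_eq hm MeasurableSet.univ,
        trim_measurableSet_eq hm MeasurableSet.univ, hUNITY n hn.le, hUNITY (n+1) (by omega)]
  -- integrals agree on tail-measurable sets
  have hg_eq : ∀ s : Set Ω, MeasurableSet[𝒢 (n+1)] s → P s < ⊤ →
      ∫ ω in s, g (n+1) ω ∂P = ∫ ω in s, g n ω ∂P := by
    intro s hsm _
    have hs : MeasurableSet s := hm s hsm
    rw [hSI (n+1) s hs, hSI n s hs]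
    congr 1
    rw [← trim_measurableSet_eq hm hsm, ← trim_measurableSet_eq hm hsm, htrim]
  -- tail measurability of g (n+1)
  have hgm' : AEStronglyMeasurable[𝒢 (n+1)] (g (n+1)) P := by
    have hevm : ∀ z : F, MeasurableSet[𝒢 (n+1)] {ω | Y (n+1) ω = z} := by
      intro z
      rw [h𝒢]
      have h1 : MeasurableSet[MeasurableSpace.comap (Y (n+1)) inferInstance]
          {ω | Y (n+1) ω = z} := ⟨{z}, measurableSet_singleton z, rfl⟩
      have hle : MeasurableSpace.comap (Y (n+1)) inferInstance
          ≤ ⨆ m ∈ Set.Ici (n+1), MeasurableSpace.comap (Y m) inferInstance :=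
        le_iSup₂ (f := fun (m : ℕ) (_ : m ∈ Set.Ici (n+1)) =>
          MeasurableSpace.comap (Y m) inferInstance) (n+1) (Set.mem_Ici.mpr le_rfl)
      exact hle _ h1
    have hmeasg : Measurable[𝒢 (n+1)] (g (n+1)) := by
      rw [hgdef]
      refine Finset.measurable_sum _ fun z _ => ?_
      exact Measurable.ite (hevm z) measurable_const measurable_const
    exact (Measurable.stronglyMeasurable hmeasg).aestronglyMeasurable
  -- conclude via uniqueness of conditional expectation
  haveI : SigmaFinite (P.trim hm) := by infer_instance
  have h1 : (fun ω => K x (Y n ω)) =ᵐ[P] g n := by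
    refine (hadapted n).mono fun ω h => ?_
    rw [hgval n ω, if_pos ((hLmem n _).mpr h)]
  have h2 : (fun ω => K x (Y (n+1) ω)) =ᵐ[P] g (n+1) := by
    refine (hadapted (n+1)).mono fun ω h => ?_
    rw [hgval (n+1) ω, if_pos ((hLmem (n+1) _).mpr h)]
  have hmain : g (n+1) =ᵐ[P] P[g n | 𝒢 (n+1)] :=
    ae_eq_condExp_of_forall_setIntegral_eq hm (hint n)
      (fun s _ _ => (hint (n+1)).integrableOn) hg_eq hgm'
  exact (condExp_congr_ae h1).trans (hmain.symm.trans h2.symm)
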